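/- Let c ∈ (0, 1), let J, F, J₁ be measurable subsets of ℝ with J₁ ⊆ F, let ζ : J × ℝ → ℝ be a measurable kernel with ζ(x, y) > c for almost every x ∈ J and every y ∈ F and ζ < c⁻¹, and let g : J₁ → ℝ satisfy c < g < c⁻¹ on J₁. Define the normalized (projective) map 𝒫 sending a probability density ψ ∈ 𝒱₀(J) to the probability density on J₁ proportional to y ↦ g(y)·∫_J ζ(x, y)ψ(x) dx. Then for all probability densities ψ₁, ψ₂ ∈ 𝒱₀(J), Θ₀(𝒫ψ₁, 𝒫ψ₂) ≤ λ·Θ₀(ψ₁, ψ₂) with λ := 1 − c⁸ ∈ (0, 1), where Θ₀ is the extended Hilbert projective metric of 𝒱₀(J₁) on the image side and of 𝒱₀(J) on the source side. -/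

import Mathlib

open MeasureTheory Set
open scoped ENNReal

noncomputable section

/-- The cone `𝒱₀(J)` of integrable nonnegative functions on `J`. -/
def V0 (J : Set ℝ) : Set (ℝ → ℝ) :=
  {φ | IntegrableOn φ J ∧ ∀ x ∈ J, 0 ≤ φ x}

/-- `β₀(φ, ψ) = inf {t > 0 : t φ − ψ ∈ 𝒱₀(J)} ∈ (0, +∞]` (with `inf ∅ = +∞`). -/
def beta0 (J : Set ℝ) (φ ψ : ℝ → ℝ) : ℝ≥0∞ :=
  sInf (ENNReal.ofReal '' {t : ℝ | 0 < t ∧ (t • φ - ψ) ∈ V0 J})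

/-- The extended Hilbert projective metric of the cone `𝒱₀(J)`. -/
def Theta0 (J : Set ℝ) (φ ψ : ℝ → ℝ) : EReal :=
  ENNReal.log (beta0 J φ ψ * beta0 J ψ φ)

/-- The normalized (projective) filtering step: `ψ ↦` the probability density
on `J₁` proportional to `y ↦ g(y)·∫_J ζ(x,y) ψ(x) dx`. -/
def Pmap (ζ : ℝ → ℝ → ℝ) (g : ℝ → ℝ) (J J₁ : Set ℝ) (ψ : ℝ → ℝ) : ℝ → ℝ :=
  fun y => (g y * ∫ x in J, ζ x y * ψ x) /
    ∫ y' in J₁, g y' * ∫ x in J, ζ x y' * ψ x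

/- ################ auxiliary material ################ -/

/-- The unnormalized operator. -/
def Lop (ζ : ℝ → ℝ → ℝ) (g : ℝ → ℝ) (J : Set ℝ) (ψ : ℝ → ℝ) (y : ℝ) : ℝ :=
  g y * ∫ x in J, ζ x y * ψ x

lemma Pmap_eq (ζ : ℝ → ℝ → ℝ) (g : ℝ → ℝ) (J J₁ : Set ℝ) (ψ : ℝ → ℝ) :
    Pmap ζ g J J₁ ψ = fun y => Lop ζ g J ψ y / ∫ y' in J₁, Lop ζ g J ψ y' := rfl

private lemma fK_ineq {ρ K : ℝ} (hρ0 : 0 < ρ) (hρ1 : ρ < 1) (hK : 1 ≤ K) :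
    K + ρ ≤ K ^ (1-ρ) + ρ * (K * K ^ (1-ρ)) := by
  have hK0 : (0:ℝ) < K := lt_of_lt_of_le one_pos hK
  set s := K ^ (1-ρ) with hs
  set u := K ^ ρ with hu
  have hsu : s * u = K := by
    rw [hs, hu, ← Real.rpow_add hK0]; norm_num
  have hs1 : 1 ≤ s := Real.one_le_rpow hK (by linarith)
  have hu0 : 0 < u := Real.rpow_pos_of_pos hK0 _
  have hamgm : u ≤ ρ * K + (1 - ρ) * 1 := by
    have h := Real.geom_mean_le_arith_mean2_weighted hρ0.le (by linarith : (0:ℝ) ≤ 1 - ρ)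
      hK0.le zero_le_one (by ring)
    simpa [Real.rpow_natCast] using h
  have key : ρ ≤ 1 - u + ρ * s * u := by nlinarith [hsu]
  have h2 : s * ρ ≤ s * (1 - u + ρ * s * u) :=
    mul_le_mul_of_nonneg_left key (by linarith)
  nlinarith [h2, hsu, hs1]

private lemma key_real {ρ a b m M : ℝ} (hρ0 : 0 < ρ) (hρ1 : ρ < 1)
    (ha : 0 < a) (hab : a ≤ b) (ham : a ≤ m)
    (h1 : M ≤ (1-ρ)*b + ρ*m) (h2 : (1-ρ)*a + ρ*M ≤ m) :
    M / m ≤ (b/a) ^ (1-ρ) := by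
  have hm0 : 0 < m := lt_of_lt_of_le ha ham
  have hb0 : 0 < b := lt_of_lt_of_le ha hab
  set K := b / a with hKdef
  have hK : 1 ≤ K := (one_le_div ha).mpr hab
  have hK0 : 0 < K := lt_of_lt_of_le one_pos hK
  set s := K ^ (1-ρ) with hs
  have hs1 : 1 ≤ s := Real.one_le_rpow hK (by linarith)
  have hbaK : b = a * K := by rw [hKdef]; field_simp
  rw [div_le_iff₀ hm0]
  -- goal : M ≤ s * m
  by_cases hcase : (1-ρ) * b ≤ (s - ρ) * m
  · -- then (1-ρ)b + ρm ≤ s m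
    nlinarith [h1]
  · push_neg at hcase
    -- M ≤ (m - (1-ρ)a)/ρ ; suffices m*(1-ρ*s) ≤ (1-ρ)*a
    have hsuff : m * (1 - ρ*s) ≤ (1-ρ)*a := by
      by_cases hsign : 1 - ρ*s ≤ 0
      · nlinarith [mul_nonpos_of_nonneg_of_nonpos hm0.le hsign]
      · push_neg at hsign
        have hKs : K * (1 - ρ*s) ≤ s - ρ := by
          have := fK_ineq hρ0 hρ1 hK
          nlinarith [this]
        have hb' : b * (1 - ρ*s) ≤ a * (s - ρ) := by
          rw [hbaK]
          calc a * K * (1 - ρ*s) = a * (K * (1 - ρ*s)) := by ring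
            _ ≤ a * (s - ρ) := mul_le_mul_of_nonneg_left hKs ha.le
        have hsρ : 0 < s - ρ := by linarith
        have hchain : m * (s - ρ) * (1 - ρ*s) < (1-ρ) * (a * (s - ρ)) := by
          calc m * (s - ρ) * (1 - ρ*s) = (s - ρ) * m * (1 - ρ*s) := by ring
            _ < (1-ρ)*b * (1 - ρ*s) := by
                apply mul_lt_mul_of_pos_right hcase hsign
            _ ≤ (1-ρ) * (a * (s - ρ)) := by nlinarith [hb']
        nlinarith [hchain, hsρ]
    nlinarith [hsuff, h2]

private lemma inner_facts {c : ℝ} (hc0 : 0 < c) {J F : Set ℝ} (hJ : MeasurableSet J)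
    {ζ : ℝ → ℝ → ℝ} (hζmeas : Measurable (Function.uncurry ζ))
    (hζ_lb : ∀ᵐ x ∂(volume.restrict J), ∀ y ∈ F, c < ζ x y)
    (hζ_ub : ∀ x y, ζ x y < c⁻¹)
    {ψ : ℝ → ℝ} (hψint : IntegrableOn ψ J) (hψpos : ∀ x ∈ J, 0 ≤ ψ x)
    {y : ℝ} (hyF : y ∈ F) :
    IntegrableOn (fun x => ζ x y * ψ x) J ∧
    c * (∫ x in J, ψ x) ≤ (∫ x in J, ζ x y * ψ x) ∧
    (∫ x in J, ζ x y * ψ x) ≤ c⁻¹ * (∫ x in J, ψ x) := by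
  have hψae : ∀ᵐ x ∂volume.restrict J, 0 ≤ ψ x := ae_restrict_of_forall_mem hJ hψpos
  have hζy : Measurable fun x => ζ x y :=
    hζmeas.comp (measurable_id.prodMk measurable_const)
  have haesm : AEStronglyMeasurable (fun x => ζ x y * ψ x) (volume.restrict J) :=
    hζy.aestronglyMeasurable.mul hψint.1
  have hbd : ∀ᵐ x ∂volume.restrict J, ‖ζ x y * ψ x‖ ≤ c⁻¹ * ψ x := by
    filter_upwards [hψae, hζ_lb] with x h0 hlb
    have h1 : c < ζ x y := hlb y hyF
    have h2 : (0:ℝ) ≤ ζ x y * ψ x := mul_nonneg (by linarith) h0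
    rw [Real.norm_eq_abs, abs_of_nonneg h2]
    exact mul_le_mul_of_nonneg_right (hζ_ub x y).le h0
  have hint : IntegrableOn (fun x => ζ x y * ψ x) J :=
    Integrable.mono' (hψint.const_mul c⁻¹) haesm hbd
  refine ⟨hint, ?_, ?_⟩
  · have hmono : ∀ᵐ x ∂volume.restrict J, c * ψ x ≤ ζ x y * ψ x := by
      filter_upwards [hψae, hζ_lb] with x h0 hlb
      exact mul_le_mul_of_nonneg_right (hlb y hyF).le h0
    calc c * (∫ x in J, ψ x) = ∫ x in J, c * ψ x := (integral_const_mul c ψ).symm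
      _ ≤ ∫ x in J, ζ x y * ψ x := integral_mono_ae (hψint.const_mul c) hint hmono
  · have hmono : ∀ᵐ x ∂volume.restrict J, ζ x y * ψ x ≤ c⁻¹ * ψ x := by
      filter_upwards [hψae] with x h0
      exact mul_le_mul_of_nonneg_right (hζ_ub x y).le h0
    calc (∫ x in J, ζ x y * ψ x) ≤ ∫ x in J, c⁻¹ * ψ x :=
        integral_mono_ae hint (hψint.const_mul c⁻¹) hmono
      _ = c⁻¹ * ∫ x in J, ψ x := integral_const_mul c⁻¹ ψ

private lemma lop_bounds {c : ℝ} (hc0 : 0 < c) {J F J₁ : Set ℝ} (hJ : MeasurableSet J)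
    (hJ₁F : J₁ ⊆ F)
    {ζ : ℝ → ℝ → ℝ} (hζmeas : Measurable (Function.uncurry ζ))
    (hζ_lb : ∀ᵐ x ∂(volume.restrict J), ∀ y ∈ F, c < ζ x y)
    (hζ_ub : ∀ x y, ζ x y < c⁻¹)
    {g : ℝ → ℝ} (hg : ∀ y ∈ J₁, c < g y ∧ g y < c⁻¹)
    {ψ : ℝ → ℝ} (hψint : IntegrableOn ψ J) (hψpos : ∀ x ∈ J, 0 ≤ ψ x)
    {y : ℝ} (hy : y ∈ J₁) :
    c * c * (∫ x in J, ψ x) ≤ Lop ζ g J ψ y ∧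
    Lop ζ g J ψ y ≤ c⁻¹ * c⁻¹ * (∫ x in J, ψ x) := by
  obtain ⟨_, hIl, hIu⟩ := inner_facts hc0 hJ hζmeas hζ_lb hζ_ub hψint hψpos (hJ₁F hy)
  obtain ⟨hg1, hg2⟩ := hg y hy
  have hw0 : 0 ≤ ∫ x in J, ψ x := setIntegral_nonneg hJ hψpos
  have hI0 : 0 ≤ ∫ x in J, ζ x y * ψ x := le_trans (by positivity) hIl
  constructor
  · calc c * c * (∫ x in J, ψ x) = c * (c * ∫ x in J, ψ x) := by ring
      _ ≤ c * ∫ x in J, ζ x y * ψ x := mul_le_mul_of_nonneg_left hIl hc0.le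
      _ ≤ g y * ∫ x in J, ζ x y * ψ x := mul_le_mul_of_nonneg_right hg1.le hI0
  · calc Lop ζ g J ψ y ≤ c⁻¹ * ∫ x in J, ζ x y * ψ x :=
        mul_le_mul_of_nonneg_right hg2.le hI0
      _ ≤ c⁻¹ * (c⁻¹ * ∫ x in J, ψ x) := by
          apply mul_le_mul_of_nonneg_left hIu (by positivity)
      _ = c⁻¹ * c⁻¹ * (∫ x in J, ψ x) := by ring

private lemma lop_sm {J : Set ℝ} {ζ : ℝ → ℝ → ℝ} (hζmeas : Measurable (Function.uncurry ζ))
    {g : ℝ → ℝ} (hgmeas : Measurable g)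
    {ψ : ℝ → ℝ} (hψ : AEStronglyMeasurable ψ (volume.restrict J)) :
    StronglyMeasurable (Lop ζ g J ψ) := by
  have h1 : Lop ζ g J ψ = Lop ζ g J (hψ.mk ψ) := by
    funext y; unfold Lop; congr 1
    exact integral_congr_ae (hψ.ae_eq_mk.mono fun x hx => by simp only []; rw [hx])
  rw [h1]
  have hF : StronglyMeasurable fun p : ℝ × ℝ => ζ p.2 p.1 * (hψ.mk ψ) p.2 :=
    ((hζmeas.comp measurable_swap).mul
      (hψ.stronglyMeasurable_mk.measurable.comp measurable_snd)).stronglyMeasurable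
  have hInt : StronglyMeasurable fun y => ∫ x in J, ζ x y * (hψ.mk ψ) x :=
    hF.integral_prod_right'
  exact hgmeas.stronglyMeasurable.mul hInt

private lemma beta0_zero (J₁ : Set ℝ) :
    beta0 J₁ (fun _ => (0:ℝ)) (fun _ => (0:ℝ)) = 0 := by
  refine le_antisymm ?_ zero_le
  refine ENNReal.le_of_forall_pos_le_add fun ε hε _ => ?_
  have hmem : ((ε:ℝ) : ℝ) ∈ {t : ℝ | 0 < t ∧ (t • (fun _ => (0:ℝ)) - (fun _ => (0:ℝ))) ∈ V0 J₁} := by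
    refine ⟨by exact_mod_cast hε, ?_⟩
    have : (((ε:ℝ)) • (fun _ => (0:ℝ)) - (fun _ => (0:ℝ))) = fun _ : ℝ => (0:ℝ) := by
      funext x; simp
    rw [this]
    exact ⟨integrableOn_zero, fun x _ => le_refl 0⟩
  calc beta0 J₁ (fun _ => (0:ℝ)) (fun _ => (0:ℝ)) ≤ ENNReal.ofReal (ε:ℝ) :=
      sInf_le ⟨(ε:ℝ), hmem, rfl⟩
    _ = (ε : ℝ≥0∞) := ENNReal.ofReal_coe_nnreal
    _ ≤ 0 + ε := by simp

set_option maxHeartbeats 1000000 in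
theorem filtering_step_contracts
    (c : ℝ) (hc : c ∈ Set.Ioo (0:ℝ) 1)
    (J F J₁ : Set ℝ) (hJ : MeasurableSet J) (hF : MeasurableSet F)
    (hJ₁ : MeasurableSet J₁) (hJ₁F : J₁ ⊆ F)
    (ζ : ℝ → ℝ → ℝ) (hζmeas : Measurable (Function.uncurry ζ))
    (hζ_lb : ∀ᵐ x ∂(volume.restrict J), ∀ y ∈ F, c < ζ x y)
    (hζ_ub : ∀ x y, ζ x y < c⁻¹)
    (g : ℝ → ℝ) (hgmeas : Measurable g)
    (hg : ∀ y ∈ J₁, c < g y ∧ g y < c⁻¹)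
    (ψ₁ ψ₂ : ℝ → ℝ) (hψ₁ : ψ₁ ∈ V0 J) (hψ₂ : ψ₂ ∈ V0 J)
    (hψ₁_prob : ∫ x in J, ψ₁ x = 1) (hψ₂_prob : ∫ x in J, ψ₂ x = 1) :
    (1 - c ^ 8) ∈ Set.Ioo (0:ℝ) 1 ∧
    Theta0 J₁ (Pmap ζ g J J₁ ψ₁) (Pmap ζ g J J₁ ψ₂)
      ≤ ((1 - c ^ 8 : ℝ) : EReal) * Theta0 J ψ₁ ψ₂ := by
  obtain ⟨hc0, hc1⟩ := hc
  have hcne : c ≠ 0 := hc0.ne'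
  have hρ0 : (0:ℝ) < c^8 := by positivity
  have hρ1 : c^8 < 1 := by
    calc c^8 < 1^8 := by
          apply pow_lt_pow_left₀ hc1 hc0.le; norm_num
      _ = 1 := one_pow 8
  refine ⟨⟨by linarith, by linarith⟩, ?_⟩
  -- degenerate cases where the normalizer vanishes
  have hPzero : ∀ ψ : ℝ → ℝ, (∫ y' in J₁, Lop ζ g J ψ y') = 0 →
      Pmap ζ g J J₁ ψ = fun _ => (0:ℝ) := by
    intro ψ hD
    funext y
    show Lop ζ g J ψ y / (∫ y' in J₁, Lop ζ g J ψ y') = 0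
    rw [hD, div_zero]
  have hdeg : ∀ (h1 : (∫ y' in J₁, Lop ζ g J ψ₁ y') = 0)
      (h2 : (∫ y' in J₁, Lop ζ g J ψ₂ y') = 0),
      Theta0 J₁ (Pmap ζ g J J₁ ψ₁) (Pmap ζ g J J₁ ψ₂)
        ≤ ((1 - c ^ 8 : ℝ) : EReal) * Theta0 J ψ₁ ψ₂ := by
    intro h1 h2
    rw [hPzero ψ₁ h1, hPzero ψ₂ h2]
    have : Theta0 J₁ (fun _ => (0:ℝ)) (fun _ => (0:ℝ)) = ⊥ := by
      rw [Theta0, beta0_zero, zero_mul, ENNReal.log_zero]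
    rw [this]
    exact bot_le
  rcases eq_or_ne (volume J₁) 0 with hμ0 | hμ0
  · have hr0 : volume.restrict J₁ = 0 := Measure.restrict_eq_zero.mpr hμ0
    exact hdeg (by rw [hr0, integral_zero_measure]) (by rw [hr0, integral_zero_measure])
  rcases eq_or_ne (volume J₁) ⊤ with hμtop | hμtop
  · have hDzero : ∀ ψ : ℝ → ℝ, ψ ∈ V0 J → (∫ x in J, ψ x) = 1 →
        (∫ y' in J₁, Lop ζ g J ψ y') = 0 := by
      intro ψ hψ hprob
      apply integral_undef
      intro hint
      have hlow : ∀ y ∈ J₁, c * c ≤ Lop ζ g J ψ y := by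
        intro y hy
        have h := (lop_bounds hc0 hJ hJ₁F hζmeas hζ_lb hζ_ub hg hψ.1 hψ.2 hy).1
        rwa [hprob, mul_one] at h
      have hcc : (0:ℝ) < c * c := by positivity
      have hfin := hint.measure_ge_lt_top hcc
      have htop : volume.restrict J₁ {y | c * c ≤ Lop ζ g J ψ y} = ⊤ := by
        refine top_unique ?_
        calc (⊤:ℝ≥0∞) = volume J₁ := hμtop.symm
          _ = volume.restrict J₁ J₁ := (Measure.restrict_apply_self _ _).symm
          _ ≤ _ := measure_mono fun y hy => hlow y hy
      rw [htop] at hfin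
      exact lt_irrefl _ hfin
    exact hdeg (hDzero ψ₁ hψ₁ hψ₁_prob) (hDzero ψ₂ hψ₂ hψ₂_prob)
  -- β ≥ 1 on probability densities
  have hbeta_ge : ∀ φ η : ℝ → ℝ, φ ∈ V0 J → η ∈ V0 J → (∫ x in J, φ x) = 1 →
      (∫ x in J, η x) = 1 → 1 ≤ beta0 J φ η := by
    intro φ η hφ hη hφp hηp
    refine le_sInf ?_
    rintro e ⟨t, ⟨ht0, htmem⟩, rfl⟩
    have hnn : 0 ≤ ∫ x in J, (t • φ - η) x := setIntegral_nonneg hJ htmem.2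
    have hcalc : ∫ x in J, (t • φ - η) x = t - 1 := by
      have hfun : ∀ x, (t • φ - η) x = t * φ x - η x := fun x => rfl
      simp only [hfun]
      rw [integral_sub ((hφ.1).const_mul t) hη.1, integral_const_mul, hφp, hηp]
      ring
    have ht1 : (1:ℝ) ≤ t := by rw [hcalc] at hnn; linarith
    simpa using ENNReal.one_le_ofReal.mpr ht1
  have hβ1ge := hbeta_ge ψ₁ ψ₂ hψ₁ hψ₂ hψ₁_prob hψ₂_prob
  have hβ2ge := hbeta_ge ψ₂ ψ₁ hψ₂ hψ₁ hψ₂_prob hψ₁_prob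
  -- infinite Θ cases
  rcases eq_or_ne (beta0 J ψ₁ ψ₂) ⊤ with hβ1top | hβ1top
  · have hR : Theta0 J ψ₁ ψ₂ = ⊤ := by
      rw [Theta0, hβ1top, ENNReal.top_mul (lt_of_lt_of_le zero_lt_one hβ2ge).ne',
        ENNReal.log_top]
    rw [hR, EReal.coe_mul_top_of_pos (by linarith : (0:ℝ) < 1 - c^8)]
    exact le_top
  rcases eq_or_ne (beta0 J ψ₂ ψ₁) ⊤ with hβ2top | hβ2top
  · have hR : Theta0 J ψ₁ ψ₂ = ⊤ := by
      rw [Theta0, hβ2top, ENNReal.mul_top (lt_of_lt_of_le zero_lt_one hβ1ge).ne',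
        ENNReal.log_top]
    rw [hR, EReal.coe_mul_top_of_pos (by linarith : (0:ℝ) < 1 - c^8)]
    exact le_top
  -- main case
  -- attainment of β
  have hatt : ∀ φ η : ℝ → ℝ, φ ∈ V0 J → beta0 J φ η ≠ ⊤ →
      ∀ x ∈ J, η x ≤ (beta0 J φ η).toReal * φ x := by
    intro φ η hφ hne x hx
    have hφ0 : 0 ≤ φ x := hφ.2 x hx
    have hb0 : (0:ℝ) ≤ (beta0 J φ η).toReal := ENNReal.toReal_nonneg
    refine le_of_forall_pos_le_add ?_
    intro ε hε
    have hδ0 : 0 < ε / (φ x + 1) := by positivity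
    have hlt : beta0 J φ η < beta0 J φ η + ENNReal.ofReal (ε / (φ x + 1)) :=
      ENNReal.lt_add_right hne (ENNReal.ofReal_pos.mpr hδ0).ne'
    have hlt2 : sInf (ENNReal.ofReal '' {t : ℝ | 0 < t ∧ (t • φ - η) ∈ V0 J})
        < beta0 J φ η + ENNReal.ofReal (ε / (φ x + 1)) := hlt
    obtain ⟨e, ⟨t, ⟨ht0, htmem⟩, rfl⟩, helt⟩ := sInf_lt_iff.mp hlt2
    have htle : t ≤ (beta0 J φ η).toReal + ε / (φ x + 1) := by
      rw [← ENNReal.ofReal_toReal hne, ← ENNReal.ofReal_add hb0 hδ0.le] at helt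
      exact le_of_lt ((ENNReal.ofReal_lt_ofReal_iff_of_nonneg ht0.le).mp helt)
    have hpt : 0 ≤ t * φ x - η x := htmem.2 x hx
    have hδφ : (ε / (φ x + 1)) * (φ x + 1) = ε := by field_simp
    calc η x ≤ t * φ x := by linarith
      _ ≤ ((beta0 J φ η).toReal + ε / (φ x + 1)) * φ x :=
          mul_le_mul_of_nonneg_right htle hφ0
      _ = (beta0 J φ η).toReal * φ x + (ε / (φ x + 1)) * φ x := by ring
      _ ≤ (beta0 J φ η).toReal * φ x + (ε / (φ x + 1)) * (φ x + 1) := by nlinarith [hδ0]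
      _ = (beta0 J φ η).toReal * φ x + ε := by rw [hδφ]
  set b₁ := (beta0 J ψ₁ ψ₂).toReal with hb₁def
  set b₂ := (beta0 J ψ₂ ψ₁).toReal with hb₂def
  have hb₁1 : (1:ℝ) ≤ b₁ := by
    rw [hb₁def, ← ENNReal.toReal_one]
    exact ENNReal.toReal_mono hβ1top hβ1ge
  have hb₂1 : (1:ℝ) ≤ b₂ := by
    rw [hb₂def, ← ENNReal.toReal_one]
    exact ENNReal.toReal_mono hβ2top hβ2ge
  have hb₂0 : (0:ℝ) < b₂ := by linarith
  have hcmp₁ : ∀ x ∈ J, ψ₂ x ≤ b₁ * ψ₁ x := hatt ψ₁ ψ₂ hψ₁ hβ1top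
  have hcmp₂ : ∀ x ∈ J, ψ₁ x ≤ b₂ * ψ₂ x := hatt ψ₂ ψ₁ hψ₂ hβ2top
  -- the comparison functions
  set φA := fun x => b₁ * ψ₁ x - ψ₂ x with hφAdef
  set φB := fun x => b₂ * ψ₂ x - ψ₁ x with hφBdef
  have hφAint : IntegrableOn φA J := (hψ₁.1.const_mul b₁).sub hψ₂.1
  have hφBint : IntegrableOn φB J := (hψ₂.1.const_mul b₂).sub hψ₁.1
  have hφApos : ∀ x ∈ J, 0 ≤ φA x := fun x hx => by
    simp only [hφAdef]; linarith [hcmp₁ x hx]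
  have hφBpos : ∀ x ∈ J, 0 ≤ φB x := fun x hx => by
    simp only [hφBdef]; linarith [hcmp₂ x hx]
  have hφAprob : (∫ x in J, φA x) = b₁ - 1 := by
    simp only [hφAdef]
    rw [integral_sub (hψ₁.1.const_mul b₁) hψ₂.1, integral_const_mul, hψ₁_prob, hψ₂_prob]
    ring
  have hφBprob : (∫ x in J, φB x) = b₂ - 1 := by
    simp only [hφBdef]
    rw [integral_sub (hψ₂.1.const_mul b₂) hψ₁.1, integral_const_mul, hψ₁_prob, hψ₂_prob]
    ring
  -- bounds for the operator values
  have hL1 : ∀ y ∈ J₁, c*c ≤ Lop ζ g J ψ₁ y ∧ Lop ζ g J ψ₁ y ≤ c⁻¹*c⁻¹ := by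
    intro y hy
    have h := lop_bounds hc0 hJ hJ₁F hζmeas hζ_lb hζ_ub hg hψ₁.1 hψ₁.2 hy
    rwa [hψ₁_prob, mul_one, mul_one] at h
  have hL2 : ∀ y ∈ J₁, c*c ≤ Lop ζ g J ψ₂ y ∧ Lop ζ g J ψ₂ y ≤ c⁻¹*c⁻¹ := by
    intro y hy
    have h := lop_bounds hc0 hJ hJ₁F hζmeas hζ_lb hζ_ub hg hψ₂.1 hψ₂.2 hy
    rwa [hψ₂_prob, mul_one, mul_one] at h
  have hLA : ∀ y ∈ J₁, c*c*(b₁-1) ≤ Lop ζ g J φA y ∧ Lop ζ g J φA y ≤ c⁻¹*c⁻¹*(b₁-1) := by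
    intro y hy
    have h := lop_bounds hc0 hJ hJ₁F hζmeas hζ_lb hζ_ub hg hφAint hφApos hy
    rwa [hφAprob] at h
  have hLB : ∀ y ∈ J₁, c*c*(b₂-1) ≤ Lop ζ g J φB y ∧ Lop ζ g J φB y ≤ c⁻¹*c⁻¹*(b₂-1) := by
    intro y hy
    have h := lop_bounds hc0 hJ hJ₁F hζmeas hζ_lb hζ_ub hg hφBint hφBpos hy
    rwa [hφBprob] at h
  have hL1pos : ∀ y ∈ J₁, 0 < Lop ζ g J ψ₁ y :=
    fun y hy => lt_of_lt_of_le (by positivity) (hL1 y hy).1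
  -- linearity
  have hlinA : ∀ y ∈ J₁, Lop ζ g J φA y = b₁ * Lop ζ g J ψ₁ y - Lop ζ g J ψ₂ y := by
    intro y hy
    have hy' := hJ₁F hy
    obtain ⟨hi1, -, -⟩ := inner_facts hc0 hJ hζmeas hζ_lb hζ_ub hψ₁.1 hψ₁.2 hy'
    obtain ⟨hi2, -, -⟩ := inner_facts hc0 hJ hζmeas hζ_lb hζ_ub hψ₂.1 hψ₂.2 hy'
    unfold Lop
    have hfun : (fun x => ζ x y * φA x) = fun x => b₁ * (ζ x y * ψ₁ x) - ζ x y * ψ₂ x := by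
      funext x; simp only [hφAdef]; ring
    rw [hfun, integral_sub (hi1.const_mul b₁) hi2, integral_const_mul]
    ring
  have hlinB : ∀ y ∈ J₁, Lop ζ g J φB y = b₂ * Lop ζ g J ψ₂ y - Lop ζ g J ψ₁ y := by
    intro y hy
    have hy' := hJ₁F hy
    obtain ⟨hi1, -, -⟩ := inner_facts hc0 hJ hζmeas hζ_lb hζ_ub hψ₁.1 hψ₁.2 hy'
    obtain ⟨hi2, -, -⟩ := inner_facts hc0 hJ hζmeas hζ_lb hζ_ub hψ₂.1 hψ₂.2 hy'
    unfold Lop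
    have hfun : (fun x => ζ x y * φB x) = fun x => b₂ * (ζ x y * ψ₂ x) - ζ x y * ψ₁ x := by
      funext x; simp only [hφBdef]; ring
    rw [hfun, integral_sub (hi2.const_mul b₂) hi1, integral_const_mul]
    ring
  -- integrability over J₁ and positivity of the normalizers
  have hintL : ∀ ψ : ℝ → ℝ, ψ ∈ V0 J → (∫ x in J, ψ x) = 1 →
      IntegrableOn (Lop ζ g J ψ) J₁ := by
    intro ψ hψ hp
    apply Measure.integrableOn_of_bounded hμtop
      (lop_sm hζmeas hgmeas hψ.1.1).aestronglyMeasurable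
    apply ae_restrict_of_forall_mem hJ₁
    intro y hy
    have h := lop_bounds hc0 hJ hJ₁F hζmeas hζ_lb hζ_ub hg hψ.1 hψ.2 hy
    rw [hp, mul_one, mul_one] at h
    rw [Real.norm_eq_abs, abs_of_nonneg (le_trans (by positivity) h.1)]
    exact h.2
  have hintL1 := hintL ψ₁ hψ₁ hψ₁_prob
  have hintL2 := hintL ψ₂ hψ₂ hψ₂_prob
  set D₁ := ∫ y' in J₁, Lop ζ g J ψ₁ y' with hD₁def
  set D₂ := ∫ y' in J₁, Lop ζ g J ψ₂ y' with hD₂def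
  have hμr : (0:ℝ) < (volume J₁).toReal := ENNReal.toReal_pos hμ0 hμtop
  have hDpos : ∀ (ψ : ℝ → ℝ), IntegrableOn (Lop ζ g J ψ) J₁ →
      (∀ y ∈ J₁, c*c ≤ Lop ζ g J ψ y) → 0 < ∫ y' in J₁, Lop ζ g J ψ y' := by
    intro ψ hint hlow
    have hle : c * c * (volume J₁).toReal ≤ ∫ y' in J₁, Lop ζ g J ψ y' := by
      have h1 : ∫ _y' in J₁, (c*c : ℝ) ≤ ∫ y' in J₁, Lop ζ g J ψ y' :=
        setIntegral_mono_on (integrableOn_const hμtop)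
          hint hJ₁ (fun y hy => hlow y hy)
      rwa [setIntegral_const, smul_eq_mul, mul_comm] at h1
    calc (0:ℝ) < c * c * (volume J₁).toReal := by positivity
      _ ≤ _ := hle
  have hD₁pos : 0 < D₁ := by
    rw [hD₁def]; exact hDpos ψ₁ hintL1 (fun y hy => (hL1 y hy).1)
  have hD₂pos : 0 < D₂ := by
    rw [hD₂def]; exact hDpos ψ₂ hintL2 (fun y hy => (hL2 y hy).1)
  -- the ratio function
  set r := fun y => Lop ζ g J ψ₂ y / Lop ζ g J ψ₁ y with hrdef
  have hrup : ∀ y ∈ J₁, r y ≤ b₁ := by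
    intro y hy
    have h0 : 0 ≤ Lop ζ g J φA y :=
      le_trans (mul_nonneg (by positivity) (by linarith) : (0:ℝ) ≤ c*c*(b₁-1)) (hLA y hy).1
    rw [hlinA y hy] at h0
    simp only [hrdef]
    rw [div_le_iff₀ (hL1pos y hy)]
    linarith
  have hrlow : ∀ y ∈ J₁, 1/b₂ ≤ r y := by
    intro y hy
    have h0 : 0 ≤ Lop ζ g J φB y :=
      le_trans (mul_nonneg (by positivity) (by linarith) : (0:ℝ) ≤ c*c*(b₂-1)) (hLB y hy).1
    rw [hlinB y hy] at h0
    simp only [hrdef]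
    rw [le_div_iff₀ (hL1pos y hy)]
    have : (1/b₂) * Lop ζ g J ψ₁ y ≤ (1/b₂) * (b₂ * Lop ζ g J ψ₂ y) := by
      apply mul_le_mul_of_nonneg_left (by linarith) (by positivity)
    calc (1/b₂) * Lop ζ g J ψ₁ y ≤ (1/b₂) * (b₂ * Lop ζ g J ψ₂ y) := this
      _ = Lop ζ g J ψ₂ y := by field_simp
  -- two-point estimates
  have hkey : ∀ (bb : ℝ) (φC : ℝ → ℝ), 1 ≤ bb →
      (∀ y ∈ J₁, c*c*(bb-1) ≤ Lop ζ g J φC y ∧ Lop ζ g J φC y ≤ c⁻¹*c⁻¹*(bb-1)) →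
      ∀ y ∈ J₁, ∀ y' ∈ J₁,
        c^8 * (Lop ζ g J φC y' / Lop ζ g J ψ₁ y') ≤ Lop ζ g J φC y / Lop ζ g J ψ₁ y := by
    intro bb φC hbb hbounds y hy y' hy'
    have hMM : (0:ℝ) ≤ bb - 1 := by linarith
    have h1 := hbounds y hy
    have h2 := hbounds y' hy'
    have hp := hL1pos y hy
    have hp' := hL1pos y' hy'
    have hLb := hL1 y hy
    have hLb' := hL1 y' hy'
    have e1 : c^4 * (bb-1) ≤ Lop ζ g J φC y / Lop ζ g J ψ₁ y := by
      rw [le_div_iff₀ hp]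
      have hmul : c^4 * (bb-1) * Lop ζ g J ψ₁ y ≤ c^4 * (bb-1) * (c⁻¹*c⁻¹) :=
        mul_le_mul_of_nonneg_left hLb.2 (by positivity)
      have hid : c^4 * (bb-1) * (c⁻¹*c⁻¹) = c*c*(bb-1) := by
        field_simp
      linarith [h1.1]
    have e2 : Lop ζ g J φC y' / Lop ζ g J ψ₁ y' ≤ c⁻¹^4 * (bb-1) := by
      rw [div_le_iff₀ hp']
      have hmul : c⁻¹^4 * (bb-1) * (c*c) ≤ c⁻¹^4 * (bb-1) * Lop ζ g J ψ₁ y' :=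
        mul_le_mul_of_nonneg_left hLb'.1 (by positivity)
      have hid : c⁻¹^4 * (bb-1) * (c*c) = c⁻¹*c⁻¹*(bb-1) := by
        field_simp
      linarith [h2.2]
    have hid2 : c^8 * (c⁻¹^4 * (bb-1)) = c^4 * (bb-1) := by
      field_simp
    calc c^8 * (Lop ζ g J φC y' / Lop ζ g J ψ₁ y')
        ≤ c^8 * (c⁻¹^4 * (bb-1)) := mul_le_mul_of_nonneg_left e2 (by positivity)
      _ = c^4 * (bb-1) := hid2
      _ ≤ _ := e1
  have hE1 : ∀ y ∈ J₁, ∀ y' ∈ J₁, c^8 * (b₁ - r y') ≤ b₁ - r y := by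
    intro y hy y' hy'
    have h := hkey b₁ φA hb₁1 hLA y hy y' hy'
    have q : ∀ z ∈ J₁, Lop ζ g J φA z / Lop ζ g J ψ₁ z = b₁ - r z := by
      intro z hz
      rw [hlinA z hz]
      simp only [hrdef]
      field_simp [(hL1pos z hz).ne']
    rw [q y hy, q y' hy'] at h
    exact h
  have hE2 : ∀ y ∈ J₁, ∀ y' ∈ J₁, c^8 * (b₂ * r y' - 1) ≤ b₂ * r y - 1 := by
    intro y hy y' hy'
    have h := hkey b₂ φB hb₂1 hLB y hy y' hy'
    have q : ∀ z ∈ J₁, Lop ζ g J φB z / Lop ζ g J ψ₁ z = b₂ * r z - 1 := by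
      intro z hz
      rw [hlinB z hz]
      simp only [hrdef]
      field_simp [(hL1pos z hz).ne']
      try ring
    rw [q y hy, q y' hy'] at h
    exact h
  -- sup and inf of the ratio
  obtain ⟨y₀, hy₀⟩ : J₁.Nonempty := nonempty_of_measure_ne_zero hμ0
  set S := r '' J₁ with hSdef
  have hSne : S.Nonempty := ⟨r y₀, ⟨y₀, hy₀, rfl⟩⟩
  have hbddb : BddBelow S := ⟨1/b₂, by rintro _ ⟨y, hy, rfl⟩; exact hrlow y hy⟩
  have hbdda : BddAbove S := ⟨b₁, by rintro _ ⟨y, hy, rfl⟩; exact hrup y hy⟩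
  set m := sInf S with hmdef
  set M := sSup S with hMdef
  have hm_le : ∀ y ∈ J₁, m ≤ r y := fun y hy => csInf_le hbddb ⟨y, hy, rfl⟩
  have hM_ge : ∀ y ∈ J₁, r y ≤ M := fun y hy => le_csSup hbdda ⟨y, hy, rfl⟩
  have ham : 1/b₂ ≤ m := le_csInf hSne (by rintro _ ⟨y, hy, rfl⟩; exact hrlow y hy)
  have ha0 : (0:ℝ) < 1/b₂ := by positivity
  have hm0 : (0:ℝ) < m := lt_of_lt_of_le ha0 ham
  have hmM : m ≤ M := le_trans (hm_le y₀ hy₀) (hM_ge y₀ hy₀)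
  have hM0 : (0:ℝ) < M := lt_of_lt_of_le hm0 hmM
  have h1 : M ≤ (1-c^8)*b₁ + c^8*m := by
    apply csSup_le hSne
    rintro _ ⟨y, hy, rfl⟩
    have hlowm : (r y - (1-c^8)*b₁)/c^8 ≤ m := by
      apply le_csInf hSne
      rintro _ ⟨y', hy', rfl⟩
      rw [div_le_iff₀ hρ0]
      have hr : (r '' J₁ : Set ℝ) = S := rfl
      have heq : r y' * c^8 - (r y - (1-c^8)*b₁) = (b₁ - r y) - c^8*(b₁ - r y') := by ring
      linarith only [hE1 y hy y' hy', heq]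
    rw [div_le_iff₀ hρ0] at hlowm
    have heq2 : m * c^8 = c^8 * m := by ring
    linarith only [hlowm, heq2]
  have h2 : (1-c^8)*(1/b₂) + c^8*M ≤ m := by
    apply le_csInf hSne
    rintro _ ⟨y, hy, rfl⟩
    have hupM : M ≤ (b₂ * r y - 1 + c^8)/(c^8 * b₂) := by
      apply csSup_le hSne
      rintro _ ⟨y', hy', rfl⟩
      rw [le_div_iff₀ (by positivity)]
      have heq : r y' * (c^8 * b₂) - (b₂ * r y - 1 + c^8) = c^8*(b₂ * r y' - 1) - (b₂ * r y - 1) := by ring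
      linarith only [hE2 y hy y' hy', heq]
    rw [le_div_iff₀ (by positivity)] at hupM
    have hinv : (1/b₂) * b₂ = 1 := by field_simp
    have key : ((1-c^8)*(1/b₂) + c^8*M) * b₂ ≤ r y * b₂ := by
      have expand : ((1-c^8)*(1/b₂) + c^8*M) * b₂ = (1-c^8)*((1/b₂)*b₂) + M*(c^8*b₂) := by ring
      rw [expand, hinv]
      linarith only [hupM]
    exact le_of_mul_le_mul_right key hb₂0
  -- the core real inequality
  have hab : (1:ℝ)/b₂ ≤ b₁ := by
    have h : (1:ℝ)/b₂ ≤ 1 := by rw [div_le_one hb₂0]; linarith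
    linarith
  have hMm : M / m ≤ (b₁ / (1/b₂)) ^ (1-c^8) :=
    key_real hρ0 hρ1 ha0 hab ham h1 h2
  have hba : b₁ / (1/b₂) = b₁ * b₂ := by field_simp
  rw [hba] at hMm
  -- construct the explicit bounds for beta0 downstream
  have hPmap₁ : Pmap ζ g J J₁ ψ₁ = fun y => Lop ζ g J ψ₁ y / D₁ := by
    rw [Pmap_eq, ← hD₁def]
  have hPmap₂ : Pmap ζ g J J₁ ψ₂ = fun y => Lop ζ g J ψ₂ y / D₂ := by
    rw [Pmap_eq, ← hD₂def]
  have hP₁int : IntegrableOn (Pmap ζ g J J₁ ψ₁) J₁ := by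
    rw [hPmap₁]; exact hintL1.div_const _
  have hP₂int : IntegrableOn (Pmap ζ g J J₁ ψ₂) J₁ := by
    rw [hPmap₂]; exact hintL2.div_const _
  set t₁ := D₁ / D₂ * M with ht₁def
  set t₂ := D₂ / (D₁ * m) with ht₂def
  have ht₁0 : 0 < t₁ := mul_pos (div_pos hD₁pos hD₂pos) hM0
  have ht₂0 : 0 < t₂ := div_pos hD₂pos (mul_pos hD₁pos hm0)
  have hmem₁ : t₁ ∈ {t : ℝ | 0 < t ∧
      (t • Pmap ζ g J J₁ ψ₁ - Pmap ζ g J J₁ ψ₂) ∈ V0 J₁} := by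
    refine ⟨ht₁0, (hP₁int.smul t₁).sub hP₂int, ?_⟩
    intro y hy
    have h0 : Lop ζ g J ψ₂ y ≤ M * Lop ζ g J ψ₁ y := by
      have h := hM_ge y hy
      simp only [hrdef] at h
      exact (div_le_iff₀ (hL1pos y hy)).mp h
    have heq : (t₁ • Pmap ζ g J J₁ ψ₁ - Pmap ζ g J J₁ ψ₂) y
        = (M * Lop ζ g J ψ₁ y - Lop ζ g J ψ₂ y) / D₂ := by
      show t₁ * Pmap ζ g J J₁ ψ₁ y - Pmap ζ g J J₁ ψ₂ y = _
      rw [hPmap₁, hPmap₂]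
      simp only [ht₁def]
      field_simp
    rw [heq]
    exact div_nonneg (by linarith) hD₂pos.le
  have hmem₂ : t₂ ∈ {t : ℝ | 0 < t ∧
      (t • Pmap ζ g J J₁ ψ₂ - Pmap ζ g J J₁ ψ₁) ∈ V0 J₁} := by
    refine ⟨ht₂0, (hP₂int.smul t₂).sub hP₁int, ?_⟩
    intro y hy
    have h0 : m * Lop ζ g J ψ₁ y ≤ Lop ζ g J ψ₂ y := by
      have h := hm_le y hy
      simp only [hrdef] at h
      exact (le_div_iff₀ (hL1pos y hy)).mp h
    have heq : (t₂ • Pmap ζ g J J₁ ψ₂ - Pmap ζ g J J₁ ψ₁) y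
        = (Lop ζ g J ψ₂ y - m * Lop ζ g J ψ₁ y) / (D₁ * m) := by
      show t₂ * Pmap ζ g J J₁ ψ₂ y - Pmap ζ g J J₁ ψ₁ y = _
      rw [hPmap₁, hPmap₂]
      simp only [ht₂def]
      field_simp
    rw [heq]
    exact div_nonneg (by linarith) (mul_pos hD₁pos hm0).le
  have hbeta₁ : beta0 J₁ (Pmap ζ g J J₁ ψ₁) (Pmap ζ g J J₁ ψ₂) ≤ ENNReal.ofReal t₁ :=
    sInf_le ⟨t₁, hmem₁, rfl⟩
  have hbeta₂ : beta0 J₁ (Pmap ζ g J J₁ ψ₂) (Pmap ζ g J J₁ ψ₁) ≤ ENNReal.ofReal t₂ :=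
    sInf_le ⟨t₂, hmem₂, rfl⟩
  have hK0 : (0:ℝ) < b₁ * b₂ := by positivity
  have ht₁t₂ : t₁ * t₂ = M / m := by
    simp only [ht₁def, ht₂def]
    field_simp
  have hfinal : t₁ * t₂ ≤ (b₁*b₂) ^ (1-c^8) := by rw [ht₁t₂]; exact hMm
  have hβprod : beta0 J ψ₁ ψ₂ * beta0 J ψ₂ ψ₁ = ENNReal.ofReal (b₁ * b₂) := by
    rw [ENNReal.ofReal_mul (by linarith : (0:ℝ) ≤ b₁), hb₁def, hb₂def,
      ENNReal.ofReal_toReal hβ1top, ENNReal.ofReal_toReal hβ2top]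
  have hTheta : Theta0 J ψ₁ ψ₂ = ((Real.log (b₁*b₂) : ℝ) : EReal) := by
    rw [Theta0, hβprod, ENNReal.log_ofReal_of_pos hK0]
  calc Theta0 J₁ (Pmap ζ g J J₁ ψ₁) (Pmap ζ g J J₁ ψ₂)
      ≤ ENNReal.log (ENNReal.ofReal t₁ * ENNReal.ofReal t₂) :=
        ENNReal.log_monotone (mul_le_mul' hbeta₁ hbeta₂)
    _ = ENNReal.log (ENNReal.ofReal (t₁ * t₂)) := by rw [ENNReal.ofReal_mul ht₁0.le]
    _ ≤ ENNReal.log (ENNReal.ofReal ((b₁*b₂) ^ (1-c^8))) :=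
        ENNReal.log_monotone (ENNReal.ofReal_le_ofReal hfinal)
    _ = (((1-c^8) * Real.log (b₁*b₂) : ℝ) : EReal) := by
        rw [ENNReal.log_ofReal_of_pos (Real.rpow_pos_of_pos hK0 _), Real.log_rpow hK0]
    _ = ((1 - c ^ 8 : ℝ) : EReal) * ((Real.log (b₁*b₂) : ℝ) : EReal) := EReal.coe_mul _ _
    _ = ((1 - c ^ 8 : ℝ) : EReal) * Theta0 J ψ₁ ψ₂ := by rw [hTheta]
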